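/- Suppose h_A and h_B are (families indexed by m,n of) real quantities satisfying h_A = (1 + u(h_A,h_B))(1 + δ(h_A))^{2m} z_A and h_B = (1 + u(h_B,h_A))(1 + δ(h_B))^{2n} z_B, where u and δ are analytic near 0 with u(0,0) = 0, δ(0) = 0, z_A = ξ∞²λ^{2m}, z_B = ξ∞²λ^{2n}, λ ∈ (0,1), and h_A, h_B → 0 as m,n → ∞. Then h_A = z_A + o(z_A + z_B) and h_B = z_B + o(z_A + z_B) as m, n → ∞. -/

import Mathlib

open Asymptotics Filter


private lemma aux16 {α : Type*} {l : Filter α} (xiInf lam : ℝ) (hxi : 0 < xiInf)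
    (hlam : lam ∈ Set.Ioo (0 : ℝ) 1)
    (u : ℝ × ℝ → ℝ) (δ : ℝ → ℝ)
    (hu : AnalyticAt ℝ u (0, 0)) (hu0 : u (0, 0) = 0)
    (hδ : AnalyticAt ℝ δ 0) (hδ0 : δ 0 = 0)
    (H G : α → ℝ) (k : α → ℕ)
    (heq : ∀ x, H x = (1 + u (H x, G x)) * (1 + δ (H x)) ^ (2 * k x)
        * (xiInf ^ 2 * lam ^ (2 * k x)))
    (hk : Tendsto k l atTop)
    (hH : Tendsto H l (nhds 0)) (hG : Tendsto G l (nhds 0)) :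
    (fun x => H x - xiInf ^ 2 * lam ^ (2 * k x)) =o[l]
      fun x => xiInf ^ 2 * lam ^ (2 * k x) := by
  obtain ⟨hl0, hl1⟩ := hlam
  set L := Real.log lam⁻¹ with hLdef
  have hLpos : 0 < L := by
    rw [hLdef, Real.log_inv]; linarith [Real.log_neg hl0 hl1]
  -- bound on δ near 0
  have hO : (fun x => δ x) =O[nhds 0] fun x => x := by
    simpa [hδ0] using hδ.differentiableAt.isBigO_sub
  rw [Asymptotics.isBigO_iff] at hO
  obtain ⟨C0, hC0⟩ := hO
  set C : ℝ := max C0 1 with hCdef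
  have hCpos : 0 < C := lt_of_lt_of_le one_pos (le_max_right _ _)
  have hC : ∀ᶠ x in nhds (0 : ℝ), |δ x| ≤ C * |x| := by
    filter_upwards [hC0] with x hx
    calc |δ x| ≤ C0 * |x| := by simpa using hx
      _ ≤ C * |x| := mul_le_mul_of_nonneg_right (le_max_left _ _) (abs_nonneg _)
  obtain ⟨r, hr, hball⟩ := Metric.eventually_nhds_iff.mp hC
  set ε : ℝ := min r (min (L / (2 * C)) (1 / (2 * C))) with hεdef
  have hε : 0 < ε := lt_min hr (lt_min (by positivity) (by positivity))
  have hδbound : ∀ y : ℝ, |y| < ε → |δ y| ≤ C * |y| := by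
    intro y hy
    apply hball
    rw [Real.dist_eq, sub_zero]
    exact hy.trans_le (min_le_left _ _)
  have hεL : ε ≤ L / (2 * C) := le_trans (min_le_right _ _) (min_le_left _ _)
  have hεhalf : ε ≤ 1 / (2 * C) := le_trans (min_le_right _ _) (min_le_right _ _)
  have hδhalf : ∀ y : ℝ, |y| < ε → |δ y| ≤ 1 / 2 := by
    intro y hy
    calc |δ y| ≤ C * |y| := hδbound y hy
      _ ≤ C * (1 / (2 * C)) := by
        apply mul_le_mul_of_nonneg_left _ hCpos.le
        exact le_of_lt (hy.trans_le hεhalf)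
      _ = 1 / 2 := by field_simp
  -- eventual smallness
  have hnhds : ∀ a : ℝ, 0 < a → ∀ᶠ y in nhds (0 : ℝ), |y| < a := by
    intro a ha
    filter_upwards [Metric.ball_mem_nhds (0 : ℝ) ha] with y hy
    simpa [Real.dist_eq] using hy
  have ev1 : ∀ᶠ x in l, |H x| < ε := hH.eventually (hnhds ε hε)
  have hucont : Tendsto (fun x => u (H x, G x)) l (nhds 0) := by
    have h1 : Tendsto (fun x => (H x, G x)) l (nhds ((0 : ℝ), (0 : ℝ))) :=
      hH.prodMk_nhds hG
    have h2 := hu.continuousAt.tendsto.comp h1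
    rwa [hu0] at h2
  have ev2 : ∀ᶠ x in l, |u (H x, G x)| ≤ 1 := by
    filter_upwards [hucont.eventually (hnhds 1 one_pos)] with x hx using hx.le
  -- key bootstrap bound
  have key : ∀ x, |H x| < ε → |u (H x, G x)| ≤ 1 →
      |H x| ≤ 2 * xiInf ^ 2 * lam ^ (k x) := by
    intro x hx hux
    have ha : |δ (H x)| ≤ C * |H x| := hδbound _ hx
    have hzpos : (0 : ℝ) < xiInf ^ 2 * lam ^ (2 * k x) := by positivity
    have habs : |H x| = |1 + u (H x, G x)| * |1 + δ (H x)| ^ (2 * k x)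
        * (xiInf ^ 2 * lam ^ (2 * k x)) := by
      conv_lhs => rw [heq x]
      rw [abs_mul, abs_mul, abs_pow, abs_of_pos hzpos]
    have h1u : |1 + u (H x, G x)| ≤ 2 := by
      calc |1 + u (H x, G x)| ≤ |(1 : ℝ)| + |u (H x, G x)| := abs_add_le _ _
        _ ≤ 1 + 1 := by simp [hux]
        _ = 2 := by norm_num
    have h1a : |1 + δ (H x)| ≤ 1 + C * |H x| := by
      calc |1 + δ (H x)| ≤ |(1 : ℝ)| + |δ (H x)| := abs_add_le _ _
        _ ≤ 1 + C * |H x| := by simp [ha]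
    have hCH : C * |H x| ≤ L / 2 := by
      calc C * |H x| ≤ C * (L / (2 * C)) :=
        mul_le_mul_of_nonneg_left (le_of_lt (hx.trans_le hεL)) hCpos.le
        _ = L / 2 := by field_simp
    have hpow : |1 + δ (H x)| ^ (2 * k x) ≤ (lam⁻¹) ^ (k x) := by
      calc |1 + δ (H x)| ^ (2 * k x) ≤ (1 + C * |H x|) ^ (2 * k x) :=
            pow_le_pow_left₀ (abs_nonneg _) h1a _
        _ ≤ (Real.exp (C * |H x|)) ^ (2 * k x) := by
            apply pow_le_pow_left₀ (by positivity)
            linarith [Real.add_one_le_exp (C * |H x|)]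
        _ = Real.exp (((2 * k x : ℕ) : ℝ) * (C * |H x|)) :=
            (Real.exp_nat_mul _ _).symm
        _ ≤ Real.exp ((k x) * L) := by
            apply Real.exp_le_exp.2
            have : (2 * k x : ℝ) * (C * |H x|) ≤ (2 * k x : ℝ) * (L / 2) :=
              mul_le_mul_of_nonneg_left hCH (by positivity)
            calc ((2 * k x : ℕ) : ℝ) * (C * |H x|)
                = (2 * (k x : ℝ)) * (C * |H x|) := by push_cast; ring
              _ ≤ (2 * (k x : ℝ)) * (L / 2) := this
              _ = (k x : ℝ) * L := by ring
        _ = (Real.exp L) ^ (k x) := by rw [← Real.exp_nat_mul]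
        _ = (lam⁻¹) ^ (k x) := by rw [hLdef, Real.exp_log (by positivity)]
    have hfin : (lam⁻¹) ^ (k x) * lam ^ (2 * k x) = lam ^ (k x) := by
      rw [two_mul, pow_add, ← mul_assoc, ← mul_pow, inv_mul_cancel₀ (ne_of_gt hl0)]
      simp
    calc |H x| = |1 + u (H x, G x)| * |1 + δ (H x)| ^ (2 * k x)
        * (xiInf ^ 2 * lam ^ (2 * k x)) := habs
      _ ≤ 2 * ((lam⁻¹) ^ (k x)) * (xiInf ^ 2 * lam ^ (2 * k x)) := by
          apply mul_le_mul_of_nonneg_right _ hzpos.le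
          exact mul_le_mul h1u hpow (by positivity) (by norm_num)
      _ = 2 * xiInf ^ 2 * ((lam⁻¹) ^ (k x) * lam ^ (2 * k x)) := by ring
      _ = 2 * xiInf ^ 2 * lam ^ (k x) := by rw [hfin]
  have evkey : ∀ᶠ x in l, |H x| ≤ 2 * xiInf ^ 2 * lam ^ (k x) := by
    filter_upwards [ev1, ev2] with x h1 h2 using key x h1 h2
  -- T → 0
  set T : α → ℝ := fun x => (2 * k x : ℝ) * (C * |H x|) with hTdef
  have hT0 : Tendsto T l (nhds 0) := by
    have hgeo : Tendsto (fun n : ℕ => (4 * C * xiInf ^ 2) * ((n : ℝ) * lam ^ n))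
        atTop (nhds 0) := by
      simpa using (tendsto_self_mul_const_pow_of_lt_one hl0.le hl1).const_mul
        (4 * C * xiInf ^ 2)
    have hbound : Tendsto (fun x => (4 * C * xiInf ^ 2) * ((k x : ℝ) * lam ^ (k x)))
        l (nhds 0) := hgeo.comp hk
    apply tendsto_of_tendsto_of_tendsto_of_le_of_le' tendsto_const_nhds hbound
    · filter_upwards with x
      have : (0:ℝ) ≤ (2 * k x : ℝ) * (C * |H x|) := by positivity
      simpa [hTdef] using this
    · filter_upwards [evkey] with x hx
      have h2 : T x ≤ (2 * k x : ℝ) * (C * (2 * xiInf ^ 2 * lam ^ (k x))) := by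
        apply mul_le_mul_of_nonneg_left _ (by positivity)
        exact mul_le_mul_of_nonneg_left hx hCpos.le
      calc T x ≤ (2 * k x : ℝ) * (C * (2 * xiInf ^ 2 * lam ^ (k x))) := h2
        _ = (4 * C * xiInf ^ 2) * ((k x : ℝ) * lam ^ (k x)) := by push_cast; ring
  -- g → 1
  have hg : Tendsto (fun x => (1 + δ (H x)) ^ (2 * k x)) l (nhds 1) := by
    have hlow : Tendsto (fun x => 1 - T x) l (nhds 1) := by
      simpa using tendsto_const_nhds.sub hT0
    have hup : Tendsto (fun x => Real.exp (T x)) l (nhds 1) := by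
      simpa [Function.comp_def] using (Real.continuous_exp.tendsto 0).comp hT0
    apply tendsto_of_tendsto_of_tendsto_of_le_of_le' hlow hup
    · filter_upwards [ev1] with x hx
      have ha : |δ (H x)| ≤ C * |H x| := hδbound _ hx
      have ha2 : |δ (H x)| ≤ 1 / 2 := hδhalf _ hx
      have hb : (-2 : ℝ) ≤ δ (H x) := by
        have := neg_abs_le (δ (H x)); linarith
      have := one_add_mul_le_pow hb (2 * k x)
      have hTle : 1 - T x ≤ 1 + ((2 * k x : ℕ) : ℝ) * δ (H x) := by
        have hna : -(C * |H x|) ≤ δ (H x) := by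
          have := neg_abs_le (δ (H x)); linarith
        have hcast : ((2 * k x : ℕ) : ℝ) = (2 * k x : ℝ) := by push_cast; ring
        have hTx : T x = 2 * (k x : ℝ) * (C * |H x|) := rfl
        rw [hcast, hTx]
        have hkpos : (0:ℝ) ≤ 2 * (k x : ℝ) := by positivity
        have h3 := mul_le_mul_of_nonneg_left hna hkpos
        linarith
      exact hTle.trans this
    · filter_upwards [ev1] with x hx
      have ha : |δ (H x)| ≤ C * |H x| := hδbound _ hx
      have ha2 : |δ (H x)| ≤ 1 / 2 := hδhalf _ hx
      have h0 : (0:ℝ) ≤ 1 + δ (H x) := by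
        have := neg_abs_le (δ (H x)); linarith
      calc (1 + δ (H x)) ^ (2 * k x) ≤ (1 + |δ (H x)|) ^ (2 * k x) := by
            apply pow_le_pow_left₀ h0
            linarith [le_abs_self (δ (H x))]
        _ ≤ (Real.exp (|δ (H x)|)) ^ (2 * k x) := by
            apply pow_le_pow_left₀ (by positivity)
            linarith [Real.add_one_le_exp (|δ (H x)|)]
        _ = Real.exp (((2 * k x : ℕ) : ℝ) * |δ (H x)|) := (Real.exp_nat_mul _ _).symm
        _ ≤ Real.exp (T x) := by
            apply Real.exp_le_exp.2
            have hTx : T x = 2 * (k x : ℝ) * (C * |H x|) := rfl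
            rw [hTx]
            calc ((2 * k x : ℕ) : ℝ) * |δ (H x)| ≤ ((2 * k x : ℕ) : ℝ) * (C * |H x|) :=
              mul_le_mul_of_nonneg_left ha (by positivity)
              _ = (2 * k x : ℝ) * (C * |H x|) := by push_cast; ring
  -- final factor → 1
  have hf : Tendsto (fun x => (1 + u (H x, G x)) * (1 + δ (H x)) ^ (2 * k x))
      l (nhds 1) := by
    have h1 : Tendsto (fun x => 1 + u (H x, G x)) l (nhds (1 + 0)) :=
      (tendsto_const_nhds (x := (1:ℝ))).add hucont
    have := h1.mul hg
    norm_num at this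
    exact this
  rw [Asymptotics.isLittleO_iff]
  intro c hc
  have hball1 : ∀ᶠ y in nhds (1 : ℝ), |y - 1| ≤ c := by
    filter_upwards [Metric.closedBall_mem_nhds (1 : ℝ) hc] with y hy
    simpa [Real.dist_eq] using hy
  filter_upwards [hf.eventually hball1] with x hx
  have heq2 : H x - xiInf ^ 2 * lam ^ (2 * k x)
      = ((1 + u (H x, G x)) * (1 + δ (H x)) ^ (2 * k x) - 1)
        * (xiInf ^ 2 * lam ^ (2 * k x)) := by
    conv_lhs => rw [heq x]
    ring
  rw [heq2]
  rw [Real.norm_eq_abs, Real.norm_eq_abs, abs_mul]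
  exact mul_le_mul_of_nonneg_right hx (abs_nonneg _)


/-- If `h_A, h_B` satisfy the implicit equations
`h_A = (1 + u(h_A,h_B))(1 + δ(h_A))^{2m} z_A` and
`h_B = (1 + u(h_B,h_A))(1 + δ(h_B))^{2n} z_B` with `u, δ` analytic vanishing at the origin,
`z_A = ξ∞²λ^{2m}`, `z_B = ξ∞²λ^{2n}`, `λ ∈ (0,1)`, and `h_A, h_B → 0`, then
`h_A = z_A + o(z_A + z_B)` and `h_B = z_B + o(z_A + z_B)` as `m, n → ∞`. -/
theorem stmt_16 (xiInf lam : ℝ) (hxi : 0 < xiInf) (hlam : lam ∈ Set.Ioo (0 : ℝ) 1)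
    (u : ℝ × ℝ → ℝ) (δ : ℝ → ℝ)
    (hu : AnalyticAt ℝ u (0, 0)) (hu0 : u (0, 0) = 0)
    (hδ : AnalyticAt ℝ δ 0) (hδ0 : δ 0 = 0)
    (hA hB : ℕ → ℕ → ℝ) (zA zB : ℕ → ℝ)
    (hzA : ∀ m, zA m = xiInf ^ 2 * lam ^ (2 * m))
    (hzB : ∀ n, zB n = xiInf ^ 2 * lam ^ (2 * n))
    (heqA : ∀ m n, hA m n = (1 + u (hA m n, hB m n)) * (1 + δ (hA m n)) ^ (2 * m) * zA m)
    (heqB : ∀ m n, hB m n = (1 + u (hB m n, hA m n)) * (1 + δ (hB m n)) ^ (2 * n) * zB n)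
    (hlimA : Tendsto (fun mn : ℕ × ℕ => hA mn.1 mn.2) atTop (nhds 0))
    (hlimB : Tendsto (fun mn : ℕ × ℕ => hB mn.1 mn.2) atTop (nhds 0)) :
    ((fun mn : ℕ × ℕ => hA mn.1 mn.2 - zA mn.1)
        =o[atTop] fun mn : ℕ × ℕ => zA mn.1 + zB mn.2) ∧
      ((fun mn : ℕ × ℕ => hB mn.1 mn.2 - zB mn.2)
        =o[atTop] fun mn : ℕ × ℕ => zA mn.1 + zB mn.2) := by
  have hkA : Tendsto (fun mn : ℕ × ℕ => mn.1) atTop atTop :=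
    tendsto_atTop_atTop.mpr fun b => ⟨(b, b), fun a ha => ha.1⟩
  have hkB : Tendsto (fun mn : ℕ × ℕ => mn.2) atTop atTop :=
    tendsto_atTop_atTop.mpr fun b => ⟨(b, b), fun a ha => ha.2⟩
  have h1 := aux16 xiInf lam hxi hlam u δ hu hu0 hδ hδ0
    (fun mn : ℕ × ℕ => hA mn.1 mn.2) (fun mn : ℕ × ℕ => hB mn.1 mn.2)
    (fun mn : ℕ × ℕ => mn.1)
    (fun mn => by
      conv_lhs => rw [heqA mn.1 mn.2]
      rw [hzA]) hkA hlimA hlimB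
  have h2 := aux16 xiInf lam hxi hlam u δ hu hu0 hδ hδ0
    (fun mn : ℕ × ℕ => hB mn.1 mn.2) (fun mn : ℕ × ℕ => hA mn.1 mn.2)
    (fun mn : ℕ × ℕ => mn.2)
    (fun mn => by
      conv_lhs => rw [heqB mn.1 mn.2]
      rw [hzB]) hkB hlimB hlimA
  have hposA : ∀ m, 0 < zA m := fun m => by rw [hzA]; exact mul_pos (pow_pos hxi 2) (pow_pos hlam.1 _)
  have hposB : ∀ n, 0 < zB n := fun n => by rw [hzB]; exact mul_pos (pow_pos hxi 2) (pow_pos hlam.1 _)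
  have hOA : (fun mn : ℕ × ℕ => xiInf ^ 2 * lam ^ (2 * mn.1)) =O[atTop]
      fun mn : ℕ × ℕ => zA mn.1 + zB mn.2 := by
    apply Asymptotics.isBigO_of_le
    intro mn
    rw [Real.norm_eq_abs, Real.norm_eq_abs, ← hzA,
      abs_of_pos (hposA mn.1), abs_of_pos (add_pos (hposA mn.1) (hposB mn.2))]
    linarith [hposB mn.2]
  have hOB : (fun mn : ℕ × ℕ => xiInf ^ 2 * lam ^ (2 * mn.2)) =O[atTop]
      fun mn : ℕ × ℕ => zA mn.1 + zB mn.2 := by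
    apply Asymptotics.isBigO_of_le
    intro mn
    rw [Real.norm_eq_abs, Real.norm_eq_abs, ← hzB,
      abs_of_pos (hposB mn.2), abs_of_pos (add_pos (hposA mn.1) (hposB mn.2))]
    linarith [hposA mn.1]
  constructor
  · have := h1.trans_isBigO hOA
    simpa only [hzA] using this
  · have := h2.trans_isBigO hOB
    simpa only [hzB] using this
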